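/- For all natural numbers k, l, the formal distributions J_k and J_l over the Weyl algebra of differential operators on ℂ[t,t⁻¹] are mutually local with locality order N = k + l + 1: for all integers m, n, both Σ_{s=0}^{N} (−1)^s · binom(N,s) · (m_{t^{m−s}} ∘ D^k) ∘ (m_{t^{n+s}} ∘ D^l) = 0 and Σ_{s=0}^{N} (−1)^s · binom(N,s) · (m_{t^{n+s}} ∘ D^l) ∘ (m_{t^{m−s}} ∘ D^k) = 0 hold in End_ℂ(ℂ[t,t⁻¹]). -/

import Mathlib

open LaurentPolynomial

noncomputable section

/-- `R = ℂ[t,t⁻¹]`, the algebra of complex Laurent polynomials. -/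
abbrev R := LaurentPolynomial ℂ

/-- Differentiation on Laurent polynomials, as a `ℂ`-linear endomorphism:
`Der (T n) = n • T (n-1)`, i.e. `Der f = f'`. -/
noncomputable def Der : Module.End ℂ R :=
  (Finsupp.lsum ℂ fun n : ℤ =>
    LinearMap.toSpanSingleton ℂ R ((n : ℂ) • LaurentPolynomial.T (n - 1)) :
      (ℤ →₀ ℂ) →ₗ[ℂ] R) ∘ₗ (AddMonoidAlgebra.coeffLinearEquiv ℂ : R ≃ₗ[ℂ] (ℤ →₀ ℂ)).toLinearMap

/-- Multiplication by `g ∈ R` as a `ℂ`-linear endomorphism `m_g`. -/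
noncomputable def mulE (g : R) : Module.End ℂ R := LinearMap.mulLeft ℂ g

namespace Stmt13Aux

open Polynomial

lemma Der_T (p : ℤ) : Der (T p) = (p : ℂ) • T (p - 1) := by
  show (Finsupp.lsum ℂ fun n : ℤ =>
    LinearMap.toSpanSingleton ℂ R ((n : ℂ) • LaurentPolynomial.T (n - 1))) (Finsupp.single p 1)
      = (p : ℂ) • T (p - 1)
  rw [Finsupp.lsum_single, LinearMap.toSpanSingleton_apply, one_smul]

lemma DerPow_T (k : ℕ) (p : ℤ) :
    (Der ^ k) (T p) = (∏ i ∈ Finset.range k, ((p : ℂ) - i)) • T (p - k) := by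
  induction k generalizing p with
  | zero => simp
  | succ k ih =>
    rw [pow_succ, Module.End.mul_apply, Der_T, map_smul, ih, smul_smul,
      Finset.prod_range_succ']
    have h1 : p - 1 - (k : ℤ) = p - (k + 1 : ℕ) := by push_cast; ring
    have h2 : ((p : ℂ)) * ∏ i ∈ Finset.range k, (((p - 1 : ℤ) : ℂ) - i)
        = (∏ i ∈ Finset.range k, ((p : ℂ) - ((i + 1 : ℕ) : ℂ))) * ((p : ℂ) - (0 : ℕ)) := by
      push_cast
      rw [sub_zero, mul_comm]
      congr 1
      exact Finset.prod_congr rfl fun i _ => by ring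
    rw [h1, h2]

lemma comp_T (a b : ℤ) (k l : ℕ) (p : ℤ) :
    ((mulE (T a) * Der ^ k) * (mulE (T b) * Der ^ l)) (T p)
      = ((∏ i ∈ Finset.range l, ((p : ℂ) - i)) *
          ∏ i ∈ Finset.range k, (((b + p - l : ℤ) : ℂ) - i)) • T (a + b + p - l - k) := by
  simp only [Module.End.mul_apply, DerPow_T, map_smul, mulE, LinearMap.mulLeft_apply,
    ← T_add, smul_smul]
  have e1 : b + (p - (l:ℤ)) = b + p - l := by ring
  rw [e1]
  congr 1
  ring

lemma fwd_kill : ∀ (N : ℕ) (P : ℂ[X]), P.degree < N →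
    (fwdDiff (1:ℕ))^[N] (fun s : ℕ => P.eval (s:ℂ)) = 0 := by
  intro N
  induction N with
  | zero =>
    intro P hP
    have : P = 0 := by
      rw [← Polynomial.degree_eq_bot]
      exact Nat.WithBot.lt_zero_iff.mp (by exact_mod_cast hP)
    subst this
    funext s; simp
  | succ N ih =>
    intro P hP
    rw [Function.iterate_succ_apply]
    have hQ : fwdDiff (1:ℕ) (fun s : ℕ => P.eval (s:ℂ))
        = fun s : ℕ => (P.comp (X + Polynomial.C 1) - P).eval (s:ℂ) := by
      funext s
      simp only [fwdDiff, eval_sub, eval_comp, eval_add, eval_X, Polynomial.eval_C]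
      push_cast
      ring_nf
    rw [hQ]
    apply ih
    by_cases hP0 : P = 0
    · simp [hP0]
    · have h1 : (X + Polynomial.C (1:ℂ)).natDegree = 1 := natDegree_X_add_C 1
      have hm : (X + Polynomial.C (1:ℂ)).Monic := monic_X_add_C 1
      have hlc : (P.comp (X + Polynomial.C 1)).leadingCoeff = P.leadingCoeff := by
        rw [leadingCoeff_comp (by rw [h1]; exact one_ne_zero), hm.leadingCoeff, one_pow,
          mul_one]
      have hcomp0 : P.comp (X + Polynomial.C (1:ℂ)) ≠ 0 := fun h => hP0 (by
        rw [← leadingCoeff_eq_zero, ← hlc, h, leadingCoeff_zero])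
      have hd : (P.comp (X + Polynomial.C 1)).degree = P.degree := by
        rw [degree_eq_natDegree hcomp0, degree_eq_natDegree hP0]
        norm_cast
        rw [natDegree_comp, h1, mul_one]
      have hlt := degree_sub_lt hd hcomp0 hlc
      rw [hd] at hlt
      calc (P.comp (X + Polynomial.C 1) - P).degree < P.degree := hlt
        _ ≤ (N : WithBot ℕ) := by
          rcases eq_or_ne P 0 with h | h
          · exact absurd h hP0
          rw [degree_eq_natDegree h] at hP ⊢
          exact_mod_cast Nat.lt_succ_iff.mp (by exact_mod_cast hP)

lemma sum_vanish (N : ℕ) (P : ℂ[X]) (hP : P.degree < N) :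
    ∑ s ∈ Finset.range (N + 1), ((-1:ℂ)^s * (N.choose s : ℂ)) * P.eval (s:ℂ) = 0 := by
  have h0 := fwdDiff_iter_eq_sum_shift (1:ℕ) (fun s : ℕ => P.eval (s:ℂ)) N 0
  rw [fwd_kill N P hP] at h0
  simp only [Pi.zero_apply, zero_add, smul_eq_mul] at h0
  have key : ∑ s ∈ Finset.range (N + 1), ((-1:ℂ)^s * (N.choose s : ℂ)) * P.eval (s:ℂ)
      = (-1:ℂ)^N * ∑ s ∈ Finset.range (N + 1),
          (((-1:ℤ)^(N - s) * (N.choose s : ℤ)) • P.eval ((s * 1 : ℕ):ℂ)) := by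
    rw [Finset.mul_sum]
    apply Finset.sum_congr rfl
    intro s hs
    have hsN : s ≤ N := Nat.lt_succ_iff.mp (Finset.mem_range.mp hs)
    have hsgn : (-1:ℂ)^N * (-1:ℂ)^(N - s) = (-1:ℂ)^s := by
      rw [← pow_add, show N + (N - s) = s + 2 * (N - s) by omega, pow_add, pow_mul,
        neg_one_sq, one_pow, mul_one]
    rw [← Int.cast_smul_eq_zsmul ℂ, smul_eq_mul]
    push_cast
    rw [mul_one]
    rw [← hsgn]
    ring
  rw [key, ← h0, mul_zero]

lemma comp_T1 (k l : ℕ) (m n p : ℤ) (s : ℕ) :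
    ((mulE (T (m - s)) * Der ^ k) * (mulE (T (n + s)) * Der ^ l)) (T p)
      = ((∏ i ∈ Finset.range l, ((p:ℂ) - i)) *
          (∏ i ∈ Finset.range k, (X + Polynomial.C (((n + p - l : ℤ):ℂ) - i)) : ℂ[X]).eval (s:ℂ))
        • T (m + n + p - l - k) := by
  rw [comp_T]
  have e : m - s + (n + s) + p - l - k = m + n + p - l - k := by ring
  rw [e]
  congr 2
  rw [eval_prod]
  apply Finset.prod_congr rfl
  intro i _
  rw [eval_add, eval_X, Polynomial.eval_C]
  push_cast
  ring

lemma comp_T2 (k l : ℕ) (m n p : ℤ) (s : ℕ) :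
    ((mulE (T (n + s)) * Der ^ l) * (mulE (T (m - s)) * Der ^ k)) (T p)
      = ((∏ i ∈ Finset.range k, ((p:ℂ) - i)) *
          (∏ i ∈ Finset.range l, (Polynomial.C (((m + p - k : ℤ):ℂ) - i) - X) : ℂ[X]).eval (s:ℂ))
        • T (m + n + p - k - l) := by
  rw [comp_T]
  have e : n + s + (m - s) + p - k - l = m + n + p - k - l := by ring
  rw [e]
  congr 2
  rw [eval_prod]
  apply Finset.prod_congr rfl
  intro i _
  rw [eval_sub, eval_X, Polynomial.eval_C]
  push_cast
  ring

lemma end_eq_zero (F : Module.End ℂ R) (h : ∀ p : ℤ, F (T p) = 0) : F = 0 := by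
  refine AddMonoidAlgebra.lhom_ext' fun a => LinearMap.ext fun b => ?_
  have hs : (AddMonoidAlgebra.single a b : R) = b • T a := by
    rw [show (T a : R) = AddMonoidAlgebra.single a 1 from rfl, AddMonoidAlgebra.smul_single, smul_eq_mul, mul_one]
  show F (AddMonoidAlgebra.single a b) = (0 : Module.End ℂ R) (AddMonoidAlgebra.single a b)
  rw [hs, map_smul, h, smul_zero, LinearMap.zero_apply]

end Stmt13Aux

open Stmt13Aux Polynomial in
/-- the formal distributions `J_k`, `J_l` over the Weyl algebra are
mutually local of order `N = k+l+1`: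
`Σ_{s=0}^{N} (−1)^s (N choose s) (m_{t^{m−s}} D^k)(m_{t^{n+s}} D^l) = 0` and the
same with the two factors interchanged, for all `m n : ℤ`. -/
theorem stmt13 (k l : ℕ) (m n : ℤ) :
    (∑ s ∈ Finset.range (k + l + 2), ((-1 : ℂ) ^ s * (Nat.choose (k + l + 1) s : ℂ)) •
        ((mulE (T (m - s)) * Der ^ k) * (mulE (T (n + s)) * Der ^ l)) = 0) ∧
    (∑ s ∈ Finset.range (k + l + 2), ((-1 : ℂ) ^ s * (Nat.choose (k + l + 1) s : ℂ)) •
        ((mulE (T (n + s)) * Der ^ l) * (mulE (T (m - s)) * Der ^ k)) = 0) := by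
  constructor
  · apply end_eq_zero
    intro p
    rw [LinearMap.sum_apply]
    have : ∀ s ∈ Finset.range (k + l + 2),
        (((-1 : ℂ) ^ s * (Nat.choose (k + l + 1) s : ℂ)) •
          ((mulE (T (m - s)) * Der ^ k) * (mulE (T (n + s)) * Der ^ l))) (T p)
        = (((-1 : ℂ) ^ s * (Nat.choose (k + l + 1) s : ℂ)) *
            ((∏ i ∈ Finset.range l, ((p:ℂ) - i)) *
              (∏ i ∈ Finset.range k, (X + Polynomial.C (((n + p - l : ℤ):ℂ) - i)) : ℂ[X]).eval (s:ℂ)))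
          • T (m + n + p - l - k) := by
      intro s _
      rw [LinearMap.smul_apply, comp_T1, smul_smul]
    rw [Finset.sum_congr rfl this, ← Finset.sum_smul]
    have hco : ∑ s ∈ Finset.range (k + l + 2),
        ((-1 : ℂ) ^ s * (Nat.choose (k + l + 1) s : ℂ)) *
          ((∏ i ∈ Finset.range l, ((p:ℂ) - i)) *
            (∏ i ∈ Finset.range k, (X + Polynomial.C (((n + p - l : ℤ):ℂ) - i)) : ℂ[X]).eval (s:ℂ)) = 0 := by
      have hdeg : (∏ i ∈ Finset.range k,
          (X + Polynomial.C (((n + p - l : ℤ):ℂ) - i)) : ℂ[X]).degree < (k + l + 1 : ℕ) := by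
        rw [degree_prod]
        simp only [degree_X_add_C]
        rw [Finset.sum_const, Finset.card_range, nsmul_eq_mul, mul_one]
        exact_mod_cast (by omega : k < k + l + 1)
      have hv := sum_vanish (k + l + 1)
        (∏ i ∈ Finset.range k, (X + Polynomial.C (((n + p - l : ℤ):ℂ) - i)) : ℂ[X]) hdeg
      rw [show k + l + 2 = k + l + 1 + 1 from rfl]
      have hfac : ∑ s ∈ Finset.range (k + l + 1 + 1),
          ((-1 : ℂ) ^ s * (Nat.choose (k + l + 1) s : ℂ)) *
            ((∏ i ∈ Finset.range l, ((p:ℂ) - i)) *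
              (∏ i ∈ Finset.range k,
                (X + Polynomial.C (((n + p - l : ℤ):ℂ) - i)) : ℂ[X]).eval (s:ℂ))
          = (∏ i ∈ Finset.range l, ((p:ℂ) - i)) *
            ∑ s ∈ Finset.range (k + l + 1 + 1),
              ((-1 : ℂ) ^ s * (Nat.choose (k + l + 1) s : ℂ)) *
                (∏ i ∈ Finset.range k,
                  (X + Polynomial.C (((n + p - l : ℤ):ℂ) - i)) : ℂ[X]).eval (s:ℂ) := by
        rw [Finset.mul_sum]
        exact Finset.sum_congr rfl fun s _ => by ring
      rw [hfac, hv, mul_zero]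
    rw [hco, zero_smul]
  · apply end_eq_zero
    intro p
    rw [LinearMap.sum_apply]
    have : ∀ s ∈ Finset.range (k + l + 2),
        (((-1 : ℂ) ^ s * (Nat.choose (k + l + 1) s : ℂ)) •
          ((mulE (T (n + s)) * Der ^ l) * (mulE (T (m - s)) * Der ^ k))) (T p)
        = (((-1 : ℂ) ^ s * (Nat.choose (k + l + 1) s : ℂ)) *
            ((∏ i ∈ Finset.range k, ((p:ℂ) - i)) *
              (∏ i ∈ Finset.range l, (Polynomial.C (((m + p - k : ℤ):ℂ) - i) - X) : ℂ[X]).eval (s:ℂ)))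
          • T (m + n + p - k - l) := by
      intro s _
      rw [LinearMap.smul_apply, comp_T2, smul_smul]
    rw [Finset.sum_congr rfl this, ← Finset.sum_smul]
    have hco : ∑ s ∈ Finset.range (k + l + 2),
        ((-1 : ℂ) ^ s * (Nat.choose (k + l + 1) s : ℂ)) *
          ((∏ i ∈ Finset.range k, ((p:ℂ) - i)) *
            (∏ i ∈ Finset.range l, (Polynomial.C (((m + p - k : ℤ):ℂ) - i) - X) : ℂ[X]).eval (s:ℂ)) = 0 := by
      have hdeg : (∏ i ∈ Finset.range l,
          (Polynomial.C (((m + p - k : ℤ):ℂ) - i) - X) : ℂ[X]).degree < (k + l + 1 : ℕ) := by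
        rw [degree_prod]
        have h1 : ∀ c : ℂ, (Polynomial.C c - X : ℂ[X]).degree = 1 := by
          intro c
          rw [show (Polynomial.C c - X : ℂ[X]) = -(X - Polynomial.C c) by ring, degree_neg, degree_X_sub_C]
        simp only [h1]
        rw [Finset.sum_const, Finset.card_range, nsmul_eq_mul, mul_one]
        exact_mod_cast (by omega : l < k + l + 1)
      have hv := sum_vanish (k + l + 1)
        (∏ i ∈ Finset.range l, (Polynomial.C (((m + p - k : ℤ):ℂ) - i) - X) : ℂ[X]) hdeg
      rw [show k + l + 2 = k + l + 1 + 1 from rfl]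
      have hfac : ∑ s ∈ Finset.range (k + l + 1 + 1),
          ((-1 : ℂ) ^ s * (Nat.choose (k + l + 1) s : ℂ)) *
            ((∏ i ∈ Finset.range k, ((p:ℂ) - i)) *
              (∏ i ∈ Finset.range l,
                (Polynomial.C (((m + p - k : ℤ):ℂ) - i) - X) : ℂ[X]).eval (s:ℂ))
          = (∏ i ∈ Finset.range k, ((p:ℂ) - i)) *
            ∑ s ∈ Finset.range (k + l + 1 + 1),
              ((-1 : ℂ) ^ s * (Nat.choose (k + l + 1) s : ℂ)) *
                (∏ i ∈ Finset.range l,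
                  (Polynomial.C (((m + p - k : ℤ):ℂ) - i) - X) : ℂ[X]).eval (s:ℂ) := by
        rw [Finset.mul_sum]
        exact Finset.sum_congr rfl fun s _ => by ring
      rw [hfac, hv, mul_zero]
    rw [hco, zero_smul]

end
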